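/- (Linear gadget, converse.) Let B, C, D ≥ 0 and let p_b, p_c, p_s ≥ 0 be arbitrary. Consider the exchange market whose goods are exactly {a, b, c, s, r} and whose agents are exactly A_1, with endowment one unit each of goods a and r and the Leontief utility with coefficient vector assigning B to b, C to c, D to s, and 1 to r, and A_2, with endowment B units of b, C units of c, D units of s, and one unit of r, and Leontief utility min(y_a, y_r). Then this market admits an equilibrium with prices p_a = B·p_b + C·p_c + D·p_s, p_b, p_c, p_s, and p_r = 1, in which A_1 consumes B units of b, C units of c, D units of s, and 1 unit of r, and A_2 consumes 1 unit each of a and r. -/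

import Mathlib

open Finset

/-- The Leontief utility function with coefficient vector `A`:
`U(y) = min over {j : A j > 0} of y j / A j` (as the infimum of this finite set). -/
noncomputable def leontief {G : Type*} (A : G → ℝ) (y : G → ℝ) : ℝ :=
  sInf {t : ℝ | ∃ j, 0 < A j ∧ t = y j / A j}

/-- `x` is an optimal bundle at prices `p` for an agent with budget `budget`
and utility function `U`. -/
def IsOptimalBundle {G : Type*} [Fintype G] (p : G → ℝ) (budget : ℝ)
    (U : (G → ℝ) → ℝ) (x : G → ℝ) : Prop :=
  (∀ j, 0 ≤ x j) ∧ (∑ j, p j * x j ≤ budget) ∧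
    ∀ y : G → ℝ, (∀ j, 0 ≤ y j) → (∑ j, p j * y j ≤ budget) → U y ≤ U x

/-- Equilibrium of an exchange market given by endowments `W` and utilities `U`:
prices are nonnegative, every agent gets an optimal affordable bundle, no good
is over-demanded, and positively priced goods clear exactly. -/
def IsEquilibrium {ι G : Type*} [Fintype ι] [Fintype G]
    (W : ι → G → ℝ) (U : ι → (G → ℝ) → ℝ) (p : G → ℝ) (x : ι → G → ℝ) : Prop :=
  (∀ j, 0 ≤ p j) ∧
  (∀ i, IsOptimalBundle p (∑ j, p j * W i j) (U i) (x i)) ∧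
  (∀ j, ∑ i, x i j ≤ ∑ i, W i j) ∧
  (∀ j, 0 < p j → ∑ i, x i j = ∑ i, W i j)

/-- Good `r` is exclusive to the set `S` of agents: every agent outside `S` has
no endowment of `r` and a utility function not depending on the `r`-coordinate. -/
def ExclusiveGood {ι G : Type*} (W : ι → G → ℝ) (U : ι → (G → ℝ) → ℝ)
    (r : G) (S : Set ι) : Prop :=
  ∀ i ∉ S, W i r = 0 ∧ ∀ y y' : G → ℝ, (∀ j, j ≠ r → y j = y' j) → U i y = U i y'

/-- **Linear gadget, converse.** For any `B, C, D ≥ 0` and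
nonnegative `p_b, p_c, p_s`, the five-good (`a,b,c,s,r = 0,1,2,3,4`) two-agent
linear-gadget market admits an equilibrium with prices
`(B·p_b + C·p_c + D·p_s, p_b, p_c, p_s, 1)` and the indicated allocations. -/
lemma leontief_self {G : Type*} (A : G → ℝ) (j0 : G) (hj0 : 0 < A j0) :
    leontief A A = 1 := by
  have h : {t : ℝ | ∃ j, 0 < A j ∧ t = A j / A j} = {1} := by
    ext t
    constructor
    · rintro ⟨j, hj, rfl⟩; simp [div_self hj.ne']
    · intro ht
      rw [Set.mem_singleton_iff] at ht
      subst ht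
      exact ⟨j0, hj0, (div_self hj0.ne').symm⟩
  rw [leontief, h, csInf_singleton]

lemma leontief_le_one {G : Type*} [Fintype G] (A p y : G → ℝ)
    (hA : ∀ j, 0 ≤ A j) (hp : ∀ j, 0 ≤ p j) (hy : ∀ j, 0 ≤ y j)
    (j0 : G) (hj0 : 0 < A j0)
    (hb : ∑ j, p j * y j ≤ ∑ j, p j * A j) (hKpos : 0 < ∑ j, p j * A j) :
    leontief A y ≤ 1 := by
  set S := {t : ℝ | ∃ j, 0 < A j ∧ t = y j / A j} with hS
  have hne : S.Nonempty := ⟨y j0 / A j0, j0, hj0, rfl⟩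
  have hbdd : BddBelow S := ⟨0, fun t ⟨j, hj, ht⟩ => ht ▸ div_nonneg (hy j) hj.le⟩
  have ht0 : 0 ≤ sInf S := le_csInf hne fun t ⟨j, hj, ht⟩ => ht ▸ div_nonneg (hy j) hj.le
  set t := sInf S with htdef
  have hle : ∀ j, t * A j ≤ y j := by
    intro j
    rcases (hA j).lt_or_eq with h | h
    · have h1 : t ≤ y j / A j := csInf_le hbdd ⟨j, h, rfl⟩
      have := mul_le_mul_of_nonneg_right h1 h.le
      rwa [div_mul_cancel₀ _ h.ne'] at this
    · rw [← h, mul_zero]; exact hy j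
  have hsum : t * (∑ j, p j * A j) ≤ ∑ j, p j * y j := by
    rw [Finset.mul_sum]
    apply Finset.sum_le_sum
    intro j _
    calc t * (p j * A j) = p j * (t * A j) := by ring
    _ ≤ p j * y j := mul_le_mul_of_nonneg_left (hle j) (hp j)
  have h2 : t * (∑ j, p j * A j) ≤ 1 * (∑ j, p j * A j) := by linarith
  have : leontief A y = t := rfl
  rw [this]
  exact le_of_mul_le_mul_right h2 hKpos


theorem linear_gadget_converse (B C D pb pc ps : ℝ)
    (hB : 0 ≤ B) (hC : 0 ≤ C) (hD : 0 ≤ D)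
    (hpb : 0 ≤ pb) (hpc : 0 ≤ pc) (hps : 0 ≤ ps) :
    IsEquilibrium
      (ι := Fin 2) (G := Fin 5)
      ![![1, 0, 0, 0, 1], ![0, B, C, D, 1]]
      ![leontief ![0, B, C, D, 1], fun y => min (y 0) (y 4)]
      ![B * pb + C * pc + D * ps, pb, pc, ps, 1]
      ![![0, B, C, D, 1], ![1, 0, 0, 0, 1]] := by
  have hBpb : 0 ≤ B * pb := mul_nonneg hB hpb
  have hCpc : 0 ≤ C * pc := mul_nonneg hC hpc
  have hDps : 0 ≤ D * ps := mul_nonneg hD hps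
  have hA1nn : ∀ j, 0 ≤ (![0, B, C, D, 1] : Fin 5 → ℝ) j := by
    intro j; fin_cases j <;> simp <;> assumption
  have hA14 : (0:ℝ) < (![0, B, C, D, 1] : Fin 5 → ℝ) 4 := by show (0:ℝ) < 1; norm_num
  have hprnn : ∀ j, 0 ≤ (![B * pb + C * pc + D * ps, pb, pc, ps, 1] : Fin 5 → ℝ) j := by
    intro j; fin_cases j <;> simp <;> positivity
  have hsumpA : ∑ j, (![B * pb + C * pc + D * ps, pb, pc, ps, 1] : Fin 5 → ℝ) j
      * (![0, B, C, D, 1] : Fin 5 → ℝ) j = pb * B + pc * C + ps * D + 1 := by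
    simp [Fin.sum_univ_five]
  have hKpos : 0 < ∑ j, (![B * pb + C * pc + D * ps, pb, pc, ps, 1] : Fin 5 → ℝ) j
      * (![0, B, C, D, 1] : Fin 5 → ℝ) j := by rw [hsumpA]; nlinarith
  refine ⟨hprnn, ?_, ?_, ?_⟩
  · intro i
    fin_cases i
    · -- agent 1
      refine ⟨hA1nn, ?_, ?_⟩
      · simp [Fin.sum_univ_five]; ring_nf; nlinarith [le_refl (0:ℝ)]
      · intro y hy hby
        show leontief _ y ≤ leontief ![0, B, C, D, 1] ![0, B, C, D, 1]
        rw [leontief_self ![0, B, C, D, 1] 4 hA14]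
        refine leontief_le_one _ _ y hA1nn hprnn hy 4 hA14 ?_ hKpos
        rw [hsumpA]
        refine le_trans hby ?_
        simp [Fin.sum_univ_five]
        ring_nf
        nlinarith [le_refl (0:ℝ)]
    · -- agent 2
      refine ⟨?_, ?_, ?_⟩
      · intro j; fin_cases j <;> norm_num
      · simp [Fin.sum_univ_five]; nlinarith [le_refl (0:ℝ)]
      · intro y hy hby
        show min (y 0) (y 4) ≤ min ((![(1:ℝ),0,0,0,1] : Fin 5 → ℝ) 0) ((![(1:ℝ),0,0,0,1] : Fin 5 → ℝ) 4)
        have hb2 : (B*pb+C*pc+D*ps) * y 0 + pb * y 1 + pc * y 2 + ps * y 3 + y 4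
            ≤ B*pb+C*pc+D*ps + 1 := by
          simp [Fin.sum_univ_five] at hby
          nlinarith [le_refl (0:ℝ)]
        have hmin0 : min (y 0) (y 4) ≤ y 0 := min_le_left _ _
        have hmin4 : min (y 0) (y 4) ≤ y 4 := min_le_right _ _
        have hx : min ((![(1:ℝ),0,0,0,1] : Fin 5 → ℝ) 0) ((![(1:ℝ),0,0,0,1] : Fin 5 → ℝ) 4) = 1 := by
          show min (1:ℝ) 1 = 1; norm_num
        rw [hx]
        nlinarith [mul_nonneg hpb (hy 1), mul_nonneg hpc (hy 2), mul_nonneg hps (hy 3),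
          mul_le_mul_of_nonneg_left hmin0 (by positivity : (0:ℝ) ≤ B*pb+C*pc+D*ps)]
  · intro j; fin_cases j <;> simp [Fin.sum_univ_two]
  · intro j _
    fin_cases j <;> simp [Fin.sum_univ_two]
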